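/- Let x, y₁, y₂ ∈ ℂⁿ with x ≠ 0. There exists a matrix Δ ∈ ℂ^{n×n} with Δx = y₁ and Δ*x = y₂ if and only if y₁*x = x*y₂. Moreover, in that case the minimal spectral norm of such a Δ equals max{‖y₁‖/‖x‖, ‖y₂‖/‖x‖}. -/

import Mathlib

open Matrix

set_option maxHeartbeats 2000000
set_option synthInstance.maxHeartbeats 1000000

/-- The spectral (operator 2-) norm of a complex matrix. -/
noncomputable def specNorm {n : ℕ} (A : Matrix (Fin n) (Fin n) ℂ) : ℝ :=
  ‖Matrix.toEuclideanCLM (𝕜 := ℂ) A‖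

/-- The Euclidean norm of a complex vector. -/
noncomputable def evNorm {n : ℕ} (v : Fin n → ℂ) : ℝ :=
  ‖(WithLp.equiv 2 (Fin n → ℂ)).symm v‖

section Aux

open ContinuousLinearMap ComplexConjugate

local notation "⟪" x ", " y "⟫" => @inner ℂ _ _ x y

variable {n : ℕ}

/-- The scalar identity at the heart of the DKW-type completion. -/
lemma scalar_core (a P S : ℂ) (ξ β : ℝ) (hξ : 0 < ξ) (hβ : 0 < β) :
    ‖(((ξ ^ 2)⁻¹ : ℝ) : ℂ) * (a * P + S)‖ ^ 2 * ξ ^ 2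
      + ‖(((ξ ^ 2)⁻¹ : ℝ) : ℂ) * P + (((β ^ 2)⁻¹ : ℝ) : ℂ) * (-(starRingEnd ℂ a)) * S‖ ^ 2
          * β ^ 2
      = (‖a‖ ^ 2 * ξ ^ 2 + β ^ 2) / ξ ^ 2 * (‖P‖ ^ 2 / ξ ^ 2 + ‖S‖ ^ 2 / β ^ 2) := by
  have hξ' : ξ ≠ 0 := hξ.ne'
  have hβ' : β ≠ 0 := hβ.ne'
  simp only [Complex.sq_norm]
  simp only [Complex.normSq_apply, Complex.add_re, Complex.add_im, Complex.mul_re,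
    Complex.mul_im, Complex.ofReal_re, Complex.ofReal_im, Complex.neg_re, Complex.neg_im,
    Complex.conj_re, Complex.conj_im]
  field_simp
  ring

/-- Bessel's inequality for two orthogonal nonzero vectors. -/
lemma bessel_two {E : Type*} [NormedAddCommGroup E] [InnerProductSpace ℂ E]
    (x v w : E) (hx : x ≠ 0) (hv : v ≠ 0) (hxv : ⟪x, v⟫ = 0) :
    ‖⟪x, w⟫‖ ^ 2 / ‖x‖ ^ 2 + ‖⟪v, w⟫‖ ^ 2 / ‖v‖ ^ 2 ≤ ‖w‖ ^ 2 := by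
  have hnx : (0:ℝ) < ‖x‖ := norm_pos_iff.mpr hx
  have hnv : (0:ℝ) < ‖v‖ := norm_pos_iff.mpr hv
  have hxx : ⟪x, x⟫ = ((‖x‖ : ℂ)) ^ 2 := inner_self_eq_norm_sq_to_K x
  have hvv : ⟪v, v⟫ = ((‖v‖ : ℂ)) ^ 2 := inner_self_eq_norm_sq_to_K v
  have hvx : ⟪v, x⟫ = 0 := by rw [← inner_conj_symm, hxv, map_zero]
  have hx2 : ((‖x‖ : ℂ)) ^ 2 ≠ 0 :=
    pow_ne_zero 2 (Complex.ofReal_ne_zero.mpr hnx.ne')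
  have hv2 : ((‖v‖ : ℂ)) ^ 2 ≠ 0 :=
    pow_ne_zero 2 (Complex.ofReal_ne_zero.mpr hnv.ne')
  set px : ℂ := ⟪x, w⟫ / ((‖x‖ : ℂ) ^ 2) with hpx
  set pv : ℂ := ⟪v, w⟫ / ((‖v‖ : ℂ) ^ 2) with hpv
  set w' : E := w - px • x - pv • v with hw'
  have h1 : ⟪x, w'⟫ = 0 := by
    simp only [hw', inner_sub_right, inner_smul_right, hxx, hxv, hpx]
    field_simp
    rw [div_self (Complex.ofReal_ne_zero.mpr hnx.ne')]; ring
  have h2 : ⟪v, w'⟫ = 0 := by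
    simp only [hw', inner_sub_right, inner_smul_right, hvv, hvx, hpv]
    field_simp
    rw [mul_div_assoc, div_self (Complex.ofReal_ne_zero.mpr hnv.ne')]; ring
  have hsplit : w = (px • x + pv • v) + w' := by rw [hw']; abel
  have hcross : ⟪px • x + pv • v, w'⟫ = 0 := by
    rw [inner_add_left, inner_smul_left, inner_smul_left, h1, h2]; ring
  have hcross2 : ⟪px • x, pv • v⟫ = 0 := by
    rw [inner_smul_left, inner_smul_right, hxv]; ring
  have e1 : ‖w‖ ^ 2 = ‖px • x + pv • v‖ ^ 2 + ‖w'‖ ^ 2 := by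
    calc ‖w‖ ^ 2 = ‖(px • x + pv • v) + w'‖ ^ 2 := by rw [← hsplit]
      _ = ‖px • x + pv • v‖ ^ 2 + 2 * Complex.re ⟪px • x + pv • v, w'⟫ + ‖w'‖ ^ 2 :=
          norm_add_sq (𝕜 := ℂ) _ _
      _ = _ := by rw [hcross]; simp
  have e2 : ‖px • x + pv • v‖ ^ 2 = ‖⟪x, w⟫‖ ^ 2 / ‖x‖ ^ 2 + ‖⟪v, w⟫‖ ^ 2 / ‖v‖ ^ 2 := by
    calc ‖px • x + pv • v‖ ^ 2
        = ‖px • x‖ ^ 2 + 2 * Complex.re ⟪px • x, pv • v⟫ + ‖pv • v‖ ^ 2 :=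
          norm_add_sq (𝕜 := ℂ) _ _
      _ = ‖px‖ ^ 2 * ‖x‖ ^ 2 + ‖pv‖ ^ 2 * ‖v‖ ^ 2 := by
          rw [hcross2]; simp [norm_smul, mul_pow]
      _ = _ := by
          rw [hpx, hpv]
          simp only [norm_div, div_pow, norm_pow, Complex.norm_real, Real.norm_eq_abs,
            abs_of_pos hnx, abs_of_pos hnv]
          rw [show (‖x‖ ^ 2) ^ 2 = ‖x‖ ^ 2 * ‖x‖ ^ 2 by ring,
            show (‖v‖ ^ 2) ^ 2 = ‖v‖ ^ 2 * ‖v‖ ^ 2 by ring]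
          field_simp
  rw [e1, e2]
  nlinarith [sq_nonneg ‖w'‖]

/-- The key one-sided construction on Euclidean space. -/
lemma key_clm {E : Type*} [NormedAddCommGroup E] [InnerProductSpace ℂ E]
    [FiniteDimensional ℂ E] (x y₁ y₂ : E) (hx : x ≠ 0)
    (h : ⟪y₁, x⟫ = ⟪x, y₂⟫) (hle : ‖y₂‖ ≤ ‖y₁‖) :
    ∃ T : E →L[ℂ] E, T x = y₁ ∧ ContinuousLinearMap.adjoint T x = y₂ ∧
      ‖T‖ ≤ ‖y₁‖ / ‖x‖ := by
  classical
  have hnx : (0:ℝ) < ‖x‖ := norm_pos_iff.mpr hx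
  have hxx : ⟪x, x⟫ = ((‖x‖ : ℂ)) ^ 2 := inner_self_eq_norm_sq_to_K x
  have hx2 : ((‖x‖ : ℂ)) ^ 2 ≠ 0 :=
    pow_ne_zero 2 (Complex.ofReal_ne_zero.mpr hnx.ne')
  set κ : ℂ := (((‖x‖ ^ 2)⁻¹ : ℝ) : ℂ) with hκ
  have hκξ : κ * ((‖x‖ : ℂ)) ^ 2 = 1 := by
    rw [hκ]
    push_cast
    field_simp
    exact div_self (Complex.ofReal_ne_zero.mpr hnx.ne')
  set a : ℂ := κ * ⟪x, y₁⟫ with ha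
  set u : E := y₁ - a • x with hu
  set v : E := y₂ - (starRingEnd ℂ a) • x with hv
  have hy1 : y₁ = a • x + u := by rw [hu]; abel
  have hy2 : y₂ = (starRingEnd ℂ a) • x + v := by rw [hv]; abel
  have hxy1 : ⟪x, y₁⟫ = a * (‖x‖ : ℂ) ^ 2 := by
    rw [ha, mul_assoc, mul_comm (⟪x, y₁⟫), ← mul_assoc, hκξ, one_mul]
  have hxu : ⟪x, u⟫ = 0 := by
    rw [hu, inner_sub_right, inner_smul_right, hxx, hxy1, sub_self]
  have hxy2 : ⟪x, y₂⟫ = (starRingEnd ℂ a) * (‖x‖ : ℂ) ^ 2 := by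
    rw [← h, ← inner_conj_symm y₁ x, hxy1, _root_.map_mul]
    congr 1
    rw [← Complex.ofReal_pow, Complex.conj_ofReal, Complex.ofReal_pow]
  have hxv : ⟪x, v⟫ = 0 := by
    rw [hv, inner_sub_right, inner_smul_right, hxx, hxy2, sub_self]
  have hvx : ⟪v, x⟫ = 0 := by rw [← inner_conj_symm, hxv, map_zero]
  set β : ℝ := ‖u‖ with hβ
  set c : ℂ := if β = 0 then 0 else (((β ^ 2)⁻¹ : ℝ) : ℂ) * (-(starRingEnd ℂ a)) with hc
  set T : E →L[ℂ] E :=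
    κ • ((innerSL ℂ x).smulRight y₁) + κ • ((innerSL ℂ v).smulRight x)
      + c • ((innerSL ℂ v).smulRight u) with hT
  have hTapp : ∀ w, T w = (κ * ⟪x, w⟫) • y₁ + (κ * ⟪v, w⟫) • x + (c * ⟪v, w⟫) • u := by
    intro w
    simp only [hT, ContinuousLinearMap.add_apply, ContinuousLinearMap.smul_apply,
      ContinuousLinearMap.smulRight_apply, innerSL_apply_apply, smul_smul]
  -- Pythagoras
  have pyth : ∀ (α γ : ℂ) (z : E), ⟪x, z⟫ = 0 →
      ‖α • x + γ • z‖ ^ 2 = ‖α‖ ^ 2 * ‖x‖ ^ 2 + ‖γ‖ ^ 2 * ‖z‖ ^ 2 := by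
    intro α γ z hz
    have : ⟪α • x, γ • z⟫ = 0 := by
      rw [inner_smul_left, inner_smul_right, hz]; ring
    rw [norm_add_sq (𝕜 := ℂ), this]
    simp [norm_smul, mul_pow]
  have hTx : T x = y₁ := by
    rw [hTapp, hxx, hvx, hκξ]
    simp
  have hadj : ContinuousLinearMap.adjoint T x = y₂ := by
    apply ext_inner_right ℂ
    intro w
    rw [ContinuousLinearMap.adjoint_inner_left, hTapp, inner_add_right, inner_add_right,
      inner_smul_right, inner_smul_right, inner_smul_right, hxx, hxu, hxy1]
    rw [hy2, inner_add_left, inner_smul_left, starRingEnd_self_apply]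
    linear_combination (a * ⟪x, w⟫ + ⟪v, w⟫) * hκξ
  refine ⟨T, hTx, hadj, ?_⟩
  apply ContinuousLinearMap.opNorm_le_bound _
    (div_nonneg (norm_nonneg _) hnx.le)
  intro w
  set P : ℂ := ⟪x, w⟫ with hP
  set S : ℂ := ⟪v, w⟫ with hS
  have haPS : a * P + S = ⟪y₂, w⟫ := by
    rw [hy2, inner_add_left, inner_smul_left, starRingEnd_self_apply, hP, hS]
  by_cases hβ0 : β = 0
  · -- u = 0 case
    have hu0 : u = 0 := by rwa [← norm_eq_zero (a := u), ← hβ]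
    have hc0 : c = 0 := by rw [hc, if_pos hβ0]
    have hTw : T w = (κ * ⟪y₂, w⟫) • x := by
      rw [hTapp, hu0, hy1, hu0, ← haPS]
      simp only [smul_zero, add_zero, hc0, zero_mul, zero_smul]
      rw [smul_smul]
      rw [← add_smul]
      congr 1
      ring
    rw [hTw, norm_smul]
    have : ‖κ * ⟪y₂, w⟫‖ = ‖⟪y₂, w⟫‖ / ‖x‖ ^ 2 := by
      rw [norm_mul, hκ]
      simp [abs_of_pos hnx, div_eq_inv_mul, mul_pow]
    rw [this]
    calc ‖⟪y₂, w⟫‖ / ‖x‖ ^ 2 * ‖x‖ ≤ ‖y₂‖ * ‖w‖ / ‖x‖ ^ 2 * ‖x‖ := by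
          gcongr
          exact norm_inner_le_norm _ _
      _ = ‖y₂‖ / ‖x‖ * ‖w‖ := by field_simp
      _ ≤ ‖y₁‖ / ‖x‖ * ‖w‖ := by gcongr
  · -- main case
    have hβpos : (0:ℝ) < β := lt_of_le_of_ne (norm_nonneg _) (Ne.symm hβ0)
    have hcval : c = (((β ^ 2)⁻¹ : ℝ) : ℂ) * (-(starRingEnd ℂ a)) := by
      rw [hc, if_neg hβ0]
    have hTw : T w = (κ * (a * P + S)) • x + (κ * P + c * S) • u := by
      rw [hTapp, hy1, ← hP, ← hS]
      module
    have hM2 : ‖y₁‖ ^ 2 = ‖a‖ ^ 2 * ‖x‖ ^ 2 + β ^ 2 := by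
      rw [hy1, show a • x + u = a • x + (1:ℂ) • u by rw [one_smul],
        pyth a 1 u hxu, hβ]
      simp
    have hI : ‖T w‖ ^ 2 = ‖y₁‖ ^ 2 / ‖x‖ ^ 2 * (‖P‖ ^ 2 / ‖x‖ ^ 2 + ‖S‖ ^ 2 / β ^ 2) := by
      rw [hTw, pyth _ _ u hxu, ← hβ, hκ, hcval, hM2]
      exact scalar_core a P S ‖x‖ β hnx hβpos
    have hbessel : ‖P‖ ^ 2 / ‖x‖ ^ 2 + ‖S‖ ^ 2 / β ^ 2 ≤ ‖w‖ ^ 2 := by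
      by_cases hv0 : v = 0
      · have hS0 : S = 0 := by rw [hS, hv0, inner_zero_left]
        rw [hS0]
        simp only [norm_zero, zero_pow, ne_eq, OfNat.ofNat_ne_zero, not_false_eq_true,
          zero_div, add_zero]
        have hPle : ‖P‖ ≤ ‖x‖ * ‖w‖ := norm_inner_le_norm _ _
        rw [div_le_iff₀ (by positivity)]
        calc ‖P‖ ^ 2 ≤ (‖x‖ * ‖w‖) ^ 2 := by
              apply pow_le_pow_left₀ (norm_nonneg _) hPle
          _ = ‖w‖ ^ 2 * ‖x‖ ^ 2 := by ring
      · have hδpos : (0:ℝ) < ‖v‖ := norm_pos_iff.mpr hv0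
        have hδβ : ‖v‖ ≤ β := by
          have h2 : ‖y₂‖ ^ 2 = ‖a‖ ^ 2 * ‖x‖ ^ 2 + ‖v‖ ^ 2 := by
            rw [hy2, show (starRingEnd ℂ a) • x + v = (starRingEnd ℂ a) • x + (1:ℂ) • v
              by rw [one_smul], pyth _ 1 v hxv]
            simp [RCLike.norm_conj]
          have h1 : ‖y₁‖ ^ 2 = ‖a‖ ^ 2 * ‖x‖ ^ 2 + β ^ 2 := hM2
          nlinarith [norm_nonneg y₁, norm_nonneg y₂, hle]
        have hB := bessel_two x v w hx hv0 hxv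
        rw [← hP, ← hS] at hB
        have : ‖S‖ ^ 2 / β ^ 2 ≤ ‖S‖ ^ 2 / ‖v‖ ^ 2 := by
          gcongr
        linarith
    have hfinal : ‖T w‖ ^ 2 ≤ (‖y₁‖ / ‖x‖ * ‖w‖) ^ 2 := by
      rw [hI]
      calc ‖y₁‖ ^ 2 / ‖x‖ ^ 2 * (‖P‖ ^ 2 / ‖x‖ ^ 2 + ‖S‖ ^ 2 / β ^ 2)
          ≤ ‖y₁‖ ^ 2 / ‖x‖ ^ 2 * ‖w‖ ^ 2 := by
            gcongr
        _ = (‖y₁‖ / ‖x‖ * ‖w‖) ^ 2 := by field_simp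
    exact le_of_pow_le_pow_left₀ two_ne_zero (by positivity) hfinal

lemma exists_clm {E : Type*} [NormedAddCommGroup E] [InnerProductSpace ℂ E]
    [FiniteDimensional ℂ E] (x y₁ y₂ : E) (hx : x ≠ 0)
    (h : ⟪y₁, x⟫ = ⟪x, y₂⟫) :
    ∃ T : E →L[ℂ] E, T x = y₁ ∧ ContinuousLinearMap.adjoint T x = y₂ ∧
      ‖T‖ ≤ max (‖y₁‖ / ‖x‖) (‖y₂‖ / ‖x‖) := by
  rcases le_total ‖y₂‖ ‖y₁‖ with hle | hle
  · obtain ⟨T, h1, h2, h3⟩ := key_clm x y₁ y₂ hx h hle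
    exact ⟨T, h1, h2, h3.trans (le_max_left _ _)⟩
  · have h' : ⟪y₂, x⟫ = ⟪x, y₁⟫ := by
      have := congrArg (starRingEnd ℂ) h
      simpa [inner_conj_symm] using this.symm
    obtain ⟨T, h1, h2, h3⟩ := key_clm x y₂ y₁ hx h' hle
    refine ⟨ContinuousLinearMap.adjoint T, h2, ?_, ?_⟩
    · rw [ContinuousLinearMap.adjoint_adjoint]; exact h1
    · calc ‖ContinuousLinearMap.adjoint T‖ = ‖T‖ :=
            LinearIsometryEquiv.norm_map ContinuousLinearMap.adjoint T
        _ ≤ ‖y₂‖ / ‖x‖ := h3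
        _ ≤ _ := le_max_right _ _

end Aux

section MatrixAux

variable {n : ℕ}

local notation "⟪" x ", " y "⟫" => @inner ℂ _ _ x y

/-- dot product vs inner product on EuclideanSpace -/
lemma dot_eq_inner (a b : Fin n → ℂ) :
    star a ⬝ᵥ b = ⟪(WithLp.equiv 2 (Fin n → ℂ)).symm a, (WithLp.equiv 2 (Fin n → ℂ)).symm b⟫ := by
  simp [PiLp.inner_apply, dotProduct, WithLp.equiv_symm_apply, PiLp.toLp_apply, mul_comm]

lemma symm_ne_zero {a : Fin n → ℂ} (ha : a ≠ 0) :
    (WithLp.equiv 2 (Fin n → ℂ)).symm a ≠ 0 := by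
  intro h
  apply ha
  simpa using congrArg (WithLp.equiv 2 (Fin n → ℂ)) h

lemma toCLM_apply (A : Matrix (Fin n) (Fin n) ℂ) (w : Fin n → ℂ) :
    Matrix.toEuclideanCLM (𝕜 := ℂ) A ((WithLp.equiv 2 (Fin n → ℂ)).symm w) =
      (WithLp.equiv 2 (Fin n → ℂ)).symm (A.mulVec w) := by
  exact Matrix.toEuclideanCLM_toLp A w

lemma evNorm_mulVec_le (A : Matrix (Fin n) (Fin n) ℂ) (w : Fin n → ℂ) :
    evNorm (A.mulVec w) ≤ specNorm A * evNorm w := by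
  have := (Matrix.toEuclideanCLM (𝕜 := ℂ) A).le_opNorm
    ((WithLp.equiv 2 (Fin n → ℂ)).symm w)
  rwa [toCLM_apply] at this

lemma specNorm_conjTranspose (A : Matrix (Fin n) (Fin n) ℂ) :
    specNorm Aᴴ = specNorm A := by
  unfold specNorm
  rw [show Aᴴ = star A from rfl, map_star, ContinuousLinearMap.star_eq_adjoint]
  exact LinearIsometryEquiv.norm_map ContinuousLinearMap.adjoint _

end MatrixAux

/-- Two-sided mapping theorem (Mehl–Mehrmann–Sharma): for `x ≠ 0` there exists `Δ` with
`Δx = y₁` and `Δ*x = y₂` iff `y₁*x = x*y₂`, and in that case the minimal spectral norm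
of such `Δ` equals `max{‖y₁‖/‖x‖, ‖y₂‖/‖x‖}`. -/
theorem two_sided_mapping {n : ℕ} (x y₁ y₂ : Fin n → ℂ) (hx : x ≠ 0) :
    ((∃ Δ : Matrix (Fin n) (Fin n) ℂ, Δ.mulVec x = y₁ ∧ Δᴴ.mulVec x = y₂) ↔
      star y₁ ⬝ᵥ x = star x ⬝ᵥ y₂) ∧
    (star y₁ ⬝ᵥ x = star x ⬝ᵥ y₂ →
      IsLeast {r : ℝ | ∃ Δ : Matrix (Fin n) (Fin n) ℂ,
          Δ.mulVec x = y₁ ∧ Δᴴ.mulVec x = y₂ ∧ specNorm Δ = r}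
        (max (evNorm y₁ / evNorm x) (evNorm y₂ / evNorm x))) := by
  have hex : evNorm x ≠ 0 := by
    simpa [evNorm, norm_eq_zero] using symm_ne_zero hx
  have hexpos : 0 < evNorm x := lt_of_le_of_ne (norm_nonneg _) (Ne.symm hex)
  -- lower bound for any solution
  have lower : ∀ Δ : Matrix (Fin n) (Fin n) ℂ, Δ.mulVec x = y₁ → Δᴴ.mulVec x = y₂ →
      max (evNorm y₁ / evNorm x) (evNorm y₂ / evNorm x) ≤ specNorm Δ := by
    intro Δ h1 h2
    have b1 : evNorm y₁ ≤ specNorm Δ * evNorm x := by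
      rw [← h1]; exact evNorm_mulVec_le Δ x
    have b2 : evNorm y₂ ≤ specNorm Δ * evNorm x := by
      rw [← h2]
      simpa [specNorm_conjTranspose] using evNorm_mulVec_le Δᴴ x
    exact max_le ((div_le_iff₀ hexpos).mpr b1) ((div_le_iff₀ hexpos).mpr b2)
  -- existence from condition
  have exist : star y₁ ⬝ᵥ x = star x ⬝ᵥ y₂ →
      ∃ Δ : Matrix (Fin n) (Fin n) ℂ, Δ.mulVec x = y₁ ∧ Δᴴ.mulVec x = y₂ ∧
        specNorm Δ ≤ max (evNorm y₁ / evNorm x) (evNorm y₂ / evNorm x) := by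
    intro h
    rw [dot_eq_inner, dot_eq_inner] at h
    obtain ⟨T, h1, h2, h3⟩ := exists_clm _ _ _ (symm_ne_zero hx) h
    refine ⟨(Matrix.toEuclideanCLM (𝕜 := ℂ)).symm T, ?_, ?_, ?_⟩
    · apply (WithLp.equiv 2 (Fin n → ℂ)).symm.injective
      rw [← toCLM_apply, StarAlgEquiv.apply_symm_apply]
      exact h1
    · apply (WithLp.equiv 2 (Fin n → ℂ)).symm.injective
      rw [← toCLM_apply]
      have : Matrix.toEuclideanCLM (𝕜 := ℂ)
          (((Matrix.toEuclideanCLM (𝕜 := ℂ)).symm T)ᴴ) = ContinuousLinearMap.adjoint T := by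
        rw [show ((Matrix.toEuclideanCLM (𝕜 := ℂ)).symm T)ᴴ
            = star ((Matrix.toEuclideanCLM (𝕜 := ℂ)).symm T) from rfl, map_star,
          StarAlgEquiv.apply_symm_apply, ContinuousLinearMap.star_eq_adjoint]
      rw [this]
      exact h2
    · unfold specNorm
      rw [StarAlgEquiv.apply_symm_apply]
      exact h3
  constructor
  · constructor
    · rintro ⟨Δ, h1, h2⟩
      rw [← h1, ← h2, Matrix.star_mulVec, Matrix.dotProduct_mulVec]
    · intro h
      obtain ⟨Δ, h1, h2, _⟩ := exist h
      exact ⟨Δ, h1, h2⟩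
  · intro h
    obtain ⟨Δ, h1, h2, h3⟩ := exist h
    constructor
    · exact ⟨Δ, h1, h2, le_antisymm h3 (lower Δ h1 h2)⟩
    · rintro r ⟨Δ', h1', h2', rfl⟩
      exact lower Δ' h1' h2'
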